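/- arXiv:2207.09886 — 2 statements merged into one kernel-verified Lean document; each statement's English description precedes it below -/
import Mathlib

section
/- (Maximum principle for the nonlocal operator P) Let I ⊂ ℝ be an open interval and u ∈ L^∞(ℝ) with u restricted to I of class C². If u(t) ≥ 0 for all t ∈ ℝ and Pu(t) ≥ 0 for all t ∈ I, then either u(t) > 0 for all t ∈ I, or u(t) = 0 for almost every t ∈ ℝ. -/
open MeasureTheory Filter

/-- The principal value integral `P u (t) = P.V. ∫ (u t - u τ) K (t - τ) dτ` equals `L`. -/
def PVat (K u : ℝ → ℝ) (t L : ℝ) : Prop :=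
  Tendsto (fun ε : ℝ => ∫ τ in {τ : ℝ | ε < |t - τ|}, (u t - u τ) * K (t - τ))
    (nhdsWithin 0 (Set.Ioi 0)) (nhds L)

open Set in
private lemma integrable_exp_neg_abs' {A : ℝ} (hA : 0 < A) :
    Integrable (fun τ : ℝ => Real.exp (-A * |τ|)) := by
  have hIoi : IntegrableOn (fun τ : ℝ => Real.exp (-A * |τ|)) (Ioi 0) := by
    refine (exp_neg_integrableOn_Ioi 0 hA).congr_fun (fun x hx => ?_) measurableSet_Ioi
    rw [abs_of_pos hx]
  have hIic : IntegrableOn (fun τ : ℝ => Real.exp (-A * |τ|)) (Iic 0) := by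
    rw [← Measure.map_neg_eq_self (volume : Measure ℝ)]
    have m : MeasurableEmbedding fun x : ℝ => -x := (Homeomorph.neg ℝ).measurableEmbedding
    rw [m.integrableOn_map_iff]
    simp_rw [Function.comp_def, abs_neg, neg_preimage, neg_Iic, neg_zero]
    exact (integrableOn_Ici_iff_integrableOn_Ioi).mpr hIoi
  rw [← integrableOn_univ, ← Iic_union_Ioi (a := (0:ℝ))]
  exact hIic.union hIoi

/-- Maximum principle for the nonlocal operator `P`. -/
theorem stmt1 (n s : ℝ) (hs0 : 0 < s) (hs1 : s < 1) (hn : 2 * s < n)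
    (K : ℝ → ℝ) (hKmeas : Measurable K) (hKeven : ∀ ξ : ℝ, K (-ξ) = K ξ)
    (hKpos : ∀ ξ : ℝ, ξ ≠ 0 → 0 < K ξ)
    (c₁ c₂ : ℝ) (hc₁ : 0 < c₁) (hc₂ : 0 < c₂)
    (hK0 : ∀ ξ : ℝ, ξ ≠ 0 → |ξ| ≤ 1 →
      c₁ * |ξ| ^ (-(1 + 2 * s)) ≤ K ξ ∧ K ξ ≤ c₂ * |ξ| ^ (-(1 + 2 * s)))
    (hKinf : ∀ ξ : ℝ, 1 ≤ |ξ| →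
      c₁ * Real.exp (-(n + 2 * s) / 2 * |ξ|) ≤ K ξ ∧
      K ξ ≤ c₂ * Real.exp (-(n + 2 * s) / 2 * |ξ|))
    (a b : ℝ) (u : ℝ → ℝ) (humeas : Measurable u)
    (hubdd : ∃ C : ℝ, ∀ t, |u t| ≤ C)
    (hureg : ContDiffOn ℝ 2 u (Set.Ioo a b))
    (hunonneg : ∀ t : ℝ, 0 ≤ u t)
    (Pu : ℝ → ℝ) (hPu : ∀ t ∈ Set.Ioo a b, PVat K u t (Pu t))
    (hPu0 : ∀ t ∈ Set.Ioo a b, 0 ≤ Pu t) :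
    (∀ t ∈ Set.Ioo a b, 0 < u t) ∨ (u =ᵐ[volume] (0 : ℝ → ℝ)) := by
  by_cases hpos : ∀ t ∈ Set.Ioo a b, 0 < u t
  · exact Or.inl hpos
  right
  push_neg at hpos
  obtain ⟨t₀, ht₀, hle⟩ := hpos
  have hu0 : u t₀ = 0 := le_antisymm hle (hunonneg t₀)
  obtain ⟨C, hC⟩ := hubdd
  set A : ℝ := (n + 2 * s) / 2 with hAdef
  have hApos : 0 < A := by
    have : 0 < n := lt_trans (by nlinarith) hn
    positivity
  -- the sets
  set S : ℝ → Set ℝ := fun ε => {τ : ℝ | ε < |t₀ - τ|} with hSdef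
  have hSmeas : ∀ ε : ℝ, MeasurableSet (S ε) := fun ε =>
    measurableSet_lt measurable_const ((measurable_const.sub measurable_id).abs)
  -- pointwise kernel bound on S ε
  have hKbound : ∀ ε : ℝ, 0 < ε → ∀ τ ∈ S ε,
      K (t₀ - τ) ≤ max (c₂ * ε ^ (-(1 + 2 * s)) * Real.exp A) c₂ * Real.exp (-A * |t₀ - τ|) := by
    intro ε hε τ hτ
    have hξ : ε < |t₀ - τ| := hτ
    have hξ0 : t₀ - τ ≠ 0 := by
      intro h
      rw [h] at hξ
      simp at hξ
      linarith
    rcases le_or_gt |t₀ - τ| 1 with h1 | h1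
    · have hb := (hK0 (t₀ - τ) hξ0 h1).2
      have h2 : |t₀ - τ| ^ (-(1 + 2 * s)) ≤ ε ^ (-(1 + 2 * s)) :=
        Real.rpow_le_rpow_of_nonpos hε (le_of_lt hξ) (by linarith)
      have h3 : Real.exp (-A) ≤ Real.exp (-A * |t₀ - τ|) := by
        apply Real.exp_le_exp.mpr
        nlinarith [abs_nonneg (t₀ - τ)]
      calc K (t₀ - τ) ≤ c₂ * |t₀ - τ| ^ (-(1 + 2 * s)) := hb
        _ ≤ c₂ * ε ^ (-(1 + 2 * s)) := by nlinarith
        _ = c₂ * ε ^ (-(1 + 2 * s)) * Real.exp A * Real.exp (-A) := by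
            rw [mul_assoc, ← Real.exp_add]; simp
        _ ≤ max (c₂ * ε ^ (-(1 + 2 * s)) * Real.exp A) c₂ * Real.exp (-A) := by
            exact mul_le_mul_of_nonneg_right
              (le_max_left (c₂ * ε ^ (-(1 + 2 * s)) * Real.exp A) c₂) (Real.exp_pos _).le
        _ ≤ max (c₂ * ε ^ (-(1 + 2 * s)) * Real.exp A) c₂ * Real.exp (-A * |t₀ - τ|) :=
            mul_le_mul_of_nonneg_left h3 (le_of_lt (lt_max_of_lt_right hc₂))
    · have hb := (hKinf (t₀ - τ) (le_of_lt h1)).2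
      have heq : -(n + 2 * s) / 2 = -A := by rw [hAdef]; ring
      rw [heq] at hb
      have h4 := le_max_right (c₂ * ε ^ (-(1 + 2 * s)) * Real.exp A) c₂
      calc K (t₀ - τ) ≤ c₂ * Real.exp (-A * |t₀ - τ|) := hb
        _ ≤ max (c₂ * ε ^ (-(1 + 2 * s)) * Real.exp A) c₂ * Real.exp (-A * |t₀ - τ|) :=
            mul_le_mul_of_nonneg_right h4 (Real.exp_pos _).le
  have hMpos : ∀ ε : ℝ, 0 < max (c₂ * ε ^ (-(1 + 2 * s)) * Real.exp A) c₂ :=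
    fun ε => lt_max_of_lt_right hc₂
  -- integrability of the kernel on S ε
  have hKint : ∀ ε : ℝ, 0 < ε → IntegrableOn (fun τ => K (t₀ - τ)) (S ε) := by
    intro ε hε
    have hexp : Integrable (fun τ : ℝ => Real.exp (-A * |t₀ - τ|)) := by
      have := (integrable_exp_neg_abs' hApos).comp_sub_left t₀
      exact this
    have hmaj : Integrable (fun τ : ℝ =>
        max (c₂ * ε ^ (-(1 + 2 * s)) * Real.exp A) c₂ * Real.exp (-A * |t₀ - τ|)) :=
      hexp.const_mul _
    refine Integrable.mono hmaj.integrableOn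
      ((hKmeas.comp (measurable_const.sub measurable_id)).aestronglyMeasurable) ?_
    rw [ae_restrict_iff' (hSmeas ε)]
    filter_upwards with τ hτ
    have hξ0 : t₀ - τ ≠ 0 := by
      intro h
      have hξ : ε < |t₀ - τ| := hτ
      rw [h] at hξ; simp at hξ; linarith
    rw [Real.norm_eq_abs, Real.norm_eq_abs, abs_of_pos (hKpos _ hξ0),
      abs_of_pos (by positivity)]
    exact hKbound ε hε τ hτ
  -- integrability of u * K on S ε
  have hC0 : 0 ≤ C := le_trans (abs_nonneg _) (hC 0)
  have huKint : ∀ ε : ℝ, 0 < ε → IntegrableOn (fun τ => u τ * K (t₀ - τ)) (S ε) := by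
    intro ε hε
    refine Integrable.mono ((hKint ε hε).const_mul C)
      ((humeas.mul (hKmeas.comp (measurable_const.sub measurable_id))).aestronglyMeasurable) ?_
    rw [ae_restrict_iff' (hSmeas ε)]
    filter_upwards with τ hτ
    have hξ0 : t₀ - τ ≠ 0 := by
      intro h
      have hξ : ε < |t₀ - τ| := hτ
      rw [h] at hξ; simp at hξ; linarith
    have hKp := hKpos _ hξ0
    rw [Real.norm_eq_abs, Real.norm_eq_abs, abs_mul, abs_of_pos hKp,
      abs_of_nonneg (by nlinarith [hC τ, abs_nonneg (u τ)] : (0:ℝ) ≤ C * K (t₀ - τ))]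
    nlinarith [hC τ, abs_nonneg (u τ), le_abs_self (u τ), neg_abs_le (u τ)]
  -- the function F
  set F : ℝ → ℝ := fun ε => ∫ τ in S ε, u τ * K (t₀ - τ) with hFdef
  have hFnonneg : ∀ ε : ℝ, 0 < ε → 0 ≤ F ε := by
    intro ε hε
    refine setIntegral_nonneg (hSmeas ε) (fun τ hτ => ?_)
    have hξ0 : t₀ - τ ≠ 0 := by
      intro h
      have hξ : ε < |t₀ - τ| := hτ
      rw [h] at hξ; simp at hξ; linarith
    exact mul_nonneg (hunonneg τ) (le_of_lt (hKpos _ hξ0))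
  -- rewrite the PV limit
  have hPVneg : Tendsto (fun ε => -F ε) (nhdsWithin 0 (Set.Ioi 0)) (nhds (Pu t₀)) := by
    have h := hPu t₀ ht₀
    unfold PVat at h
    have : (fun ε : ℝ => ∫ τ in {τ : ℝ | ε < |t₀ - τ|}, (u t₀ - u τ) * K (t₀ - τ))
        = fun ε => -F ε := by
      funext ε
      rw [hFdef, ← integral_neg]
      apply setIntegral_congr_fun (hSmeas ε)
      intro τ _
      rw [hu0]; ring
    rwa [this] at h
  have hFt : Tendsto F (nhdsWithin 0 (Set.Ioi 0)) (nhds (-Pu t₀)) := by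
    have := hPVneg.neg
    simpa using this
  have hPu0' : Pu t₀ = 0 := by
    have h1 : 0 ≤ Pu t₀ := hPu0 t₀ ht₀
    have h2 : -Pu t₀ ≥ 0 := by
      refine ge_of_tendsto hFt ?_
      filter_upwards [self_mem_nhdsWithin] with ε (hε : ε ∈ Set.Ioi 0)
      exact hFnonneg ε hε
    linarith
  rw [hPu0', neg_zero] at hFt
  -- each F ε = 0
  have hF0 : ∀ ε : ℝ, 0 < ε → F ε = 0 := by
    intro ε hε
    refine le_antisymm ?_ (hFnonneg ε hε)
    refine ge_of_tendsto hFt ?_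
    filter_upwards [Ioo_mem_nhdsGT_of_mem (Set.mem_Ico.mpr ⟨le_refl 0, hε⟩)] with ε' hε'
    obtain ⟨hε'0, hε'ε⟩ := hε'
    refine setIntegral_mono_set (huKint ε' hε'0) ?_ ?_
    · rw [EventuallyLE, ae_restrict_iff' (hSmeas ε')]
      filter_upwards with τ hτ
      have hξ0 : t₀ - τ ≠ 0 := by
        intro h
        have hξ : ε' < |t₀ - τ| := hτ
        rw [h] at hξ; simp at hξ; linarith
      exact mul_nonneg (hunonneg τ) (le_of_lt (hKpos _ hξ0))
    · refine HasSubset.Subset.eventuallyLE (fun τ hτ => ?_)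
      exact lt_of_le_of_lt (le_of_lt hε'ε) hτ
  -- u = 0 a.e. on each S ε
  have hae : ∀ ε : ℝ, 0 < ε → ∀ᵐ τ ∂(volume.restrict (S ε)), u τ = 0 := by
    intro ε hε
    have h0 : (fun τ => u τ * K (t₀ - τ)) =ᵐ[volume.restrict (S ε)] 0 := by
      refine (setIntegral_eq_zero_iff_of_nonneg_ae ?_ (huKint ε hε)).mp (hF0 ε hε)
      rw [EventuallyLE, ae_restrict_iff' (hSmeas ε)]
      filter_upwards with τ hτ
      have hξ0 : t₀ - τ ≠ 0 := by
        intro h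
        have hξ : ε < |t₀ - τ| := hτ
        rw [h] at hξ; simp at hξ; linarith
      exact mul_nonneg (hunonneg τ) (le_of_lt (hKpos _ hξ0))
    filter_upwards [h0, ae_restrict_mem (hSmeas ε)] with τ h1 h2
    have hξ0 : t₀ - τ ≠ 0 := by
      intro h
      have hξ : ε < |t₀ - τ| := h2
      rw [h] at hξ; simp at hξ; linarith
    have hKp := hKpos _ hξ0
    have : u τ * K (t₀ - τ) = 0 := h1
    exact (mul_eq_zero.mp this).resolve_right (ne_of_gt hKp)
  -- combine over ε = 1/(k+1)
  have hae' : ∀ k : ℕ, ∀ᵐ τ, τ ∈ S (1 / (k + 1)) → u τ = 0 := by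
    intro k
    have hk : (0:ℝ) < 1 / (k + 1) := by positivity
    exact (ae_restrict_iff' (hSmeas _)).mp (hae _ hk)
  have hall : ∀ᵐ τ, ∀ k : ℕ, τ ∈ S (1 / (k + 1)) → u τ = 0 := ae_all_iff.mpr hae'
  have hne : ∀ᵐ τ : ℝ, τ ≠ t₀ := by
    rw [ae_iff]
    have : {τ : ℝ | ¬τ ≠ t₀} = {t₀} := by ext τ; simp
    rw [this]
    exact measure_singleton t₀
  filter_upwards [hall, hne] with τ h1 h2
  have habs : 0 < |t₀ - τ| := by
    rw [abs_pos, sub_ne_zero]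
    exact fun h => h2 h.symm
  obtain ⟨k, hk⟩ := exists_nat_one_div_lt habs
  exact h1 k hk
end

section
/- (Oscillation implies derivative mass) Let v ∈ C¹(ℝ) satisfy the Oscillation Condition with constants M, ε > 0: on every interval of length M, max v > 1 + ε and min v < 1 − ε. Then for every interval I = [a,b] with b − a ≥ 5M there exist points a < x₀ < x₁ < b with v'(x₀) = v'(x₁) = 0, ∫_{x₀}^{x₁} (v'(t))⁺ dt > 2ε, and ∫_{x₀}^{x₁} (v'(t))⁻ dt > 2ε. -/
open MeasureTheory Filter

/-- The Oscillation Condition with constants `M, ε`: on every interval of length `M`,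
`v` exceeds `1 + ε` somewhere and drops below `1 - ε` somewhere. -/
def OscCond (v : ℝ → ℝ) (M ε : ℝ) : Prop :=
  ∀ a : ℝ, (∃ t ∈ Set.Icc a (a + M), 1 + ε < v t) ∧
    (∃ t ∈ Set.Icc a (a + M), v t < 1 - ε)

lemma aux_int1 (g : ℝ → ℝ) (hg : Continuous g) {p q r : ℝ} (hpq : p ≤ q) (hqr : q ≤ r) :
    (∫ t in p..q, g t) ≤ ∫ t in p..r, max (g t) 0 := by
  have hmax : Continuous fun t => max (g t) 0 := hg.max continuous_const
  have h1 : (∫ t in p..q, g t) ≤ ∫ t in p..q, max (g t) 0 :=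
    intervalIntegral.integral_mono_on hpq (hg.intervalIntegrable _ _)
      (hmax.intervalIntegrable _ _) (fun t _ => le_max_left _ _)
  have h2 : (∫ t in p..q, max (g t) 0) ≤ ∫ t in p..r, max (g t) 0 := by
    rw [← intervalIntegral.integral_add_adjacent_intervals
      (hmax.intervalIntegrable p q) (hmax.intervalIntegrable q r)]
    have : 0 ≤ ∫ t in q..r, max (g t) 0 :=
      intervalIntegral.integral_nonneg hqr (fun t _ => le_max_right _ _)
    linarith
  linarith

lemma aux_int2 (g : ℝ → ℝ) (hg : Continuous g) {p q r : ℝ} (hpq : p ≤ q) (hqr : q ≤ r) :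
    (∫ t in q..r, g t) ≤ ∫ t in p..r, max (g t) 0 := by
  have hmax : Continuous fun t => max (g t) 0 := hg.max continuous_const
  have h1 : (∫ t in q..r, g t) ≤ ∫ t in q..r, max (g t) 0 :=
    intervalIntegral.integral_mono_on hqr (hg.intervalIntegrable _ _)
      (hmax.intervalIntegrable _ _) (fun t _ => le_max_left _ _)
  have h2 : (∫ t in q..r, max (g t) 0) ≤ ∫ t in p..r, max (g t) 0 := by
    rw [← intervalIntegral.integral_add_adjacent_intervals
      (hmax.intervalIntegrable p q) (hmax.intervalIntegrable q r)]
    have : 0 ≤ ∫ t in p..q, max (g t) 0 :=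
      intervalIntegral.integral_nonneg hpq (fun t _ => le_max_right _ _)
    linarith
  linarith

lemma exists_min_crit (v : ℝ → ℝ) (hv : ContDiff ℝ 1 v) {p₀ q p₂ : ℝ}
    (h1 : p₀ ≤ q) (h2 : q ≤ p₂) (hq0 : v q < v p₀) (hq2 : v q < v p₂) :
    ∃ x, p₀ < x ∧ x < p₂ ∧ deriv v x = 0 ∧ v x ≤ v q := by
  obtain ⟨x, hx, hmin⟩ := isCompact_Icc.exists_isMinOn (Set.nonempty_Icc.2 (h1.trans h2))
    (hv.continuous.continuousOn (s := Set.Icc p₀ p₂))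
  have hvx : v x ≤ v q := hmin ⟨h1, h2⟩
  have hx0 : p₀ < x := by
    rcases lt_or_eq_of_le hx.1 with h | h
    · exact h
    · exact absurd (h ▸ (hvx.trans_lt hq0)) (lt_irrefl _)
  have hx2 : x < p₂ := by
    rcases lt_or_eq_of_le hx.2 with h | h
    · exact h
    · exact absurd (h ▸ (hvx.trans_lt hq2)) (lt_irrefl _)
  refine ⟨x, hx0, hx2, ?_, hvx⟩
  exact (hmin.isLocalMin (Icc_mem_nhds hx0 hx2)).deriv_eq_zero

/-- Oscillation implies derivative mass: in every interval of length `≥ 5M` there are two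
critical points between which both the positive and the negative part of `v'` have
integral greater than `2ε`. -/
theorem stmt15 (v : ℝ → ℝ) (hv : ContDiff ℝ 1 v)
    (M ε : ℝ) (hM : 0 < M) (hε : 0 < ε) (hosc : OscCond v M ε) :
    ∀ a b : ℝ, 5 * M ≤ b - a →
      ∃ x₀ x₁ : ℝ, a < x₀ ∧ x₀ < x₁ ∧ x₁ < b ∧
        deriv v x₀ = 0 ∧ deriv v x₁ = 0 ∧
        2 * ε < ∫ t in x₀..x₁, max (deriv v t) 0 ∧
        2 * ε < ∫ t in x₀..x₁, max (-(deriv v t)) 0 := by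
  intro a b hab
  obtain ⟨⟨p₀, hp₀I, hp₀⟩, -⟩ := hosc a
  obtain ⟨-, ⟨q₁, hq₁I, hq₁⟩⟩ := hosc (a + M)
  obtain ⟨⟨p₂, hp₂I, hp₂⟩, -⟩ := hosc (a + 2 * M)
  obtain ⟨-, ⟨q₃, hq₃I, hq₃⟩⟩ := hosc (a + 3 * M)
  obtain ⟨⟨p₄, hp₄I, hp₄⟩, -⟩ := hosc (a + 4 * M)
  have hdc : Continuous (deriv v) := hv.continuous_deriv le_rfl
  have hdiff : Differentiable ℝ v := hv.differentiable one_ne_zero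
  -- orderings
  have h01 : p₀ ≤ q₁ := hp₀I.2.trans (by linarith [hq₁I.1])
  have h12 : q₁ ≤ p₂ := hq₁I.2.trans (by linarith [hp₂I.1])
  have h23 : p₂ ≤ q₃ := hp₂I.2.trans (by linarith [hq₃I.1])
  have h34 : q₃ ≤ p₄ := hq₃I.2.trans (by linarith [hp₄I.1])
  have hv01 : v q₁ < v p₀ := by linarith
  have hv12 : v q₁ < v p₂ := by linarith
  have hv23 : v q₃ < v p₂ := by linarith
  have hv34 : v q₃ < v p₄ := by linarith
  obtain ⟨x₀, hx₀l, hx₀r, hd₀, hvx₀⟩ := exists_min_crit v hv h01 h12 hv01 hv12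
  obtain ⟨x₁, hx₁l, hx₁r, hd₁, hvx₁⟩ := exists_min_crit v hv h23 h34 hv23 hv34
  have hax₀ : a < x₀ := lt_of_le_of_lt hp₀I.1 hx₀l
  have hx₀x₁ : x₀ < x₁ := hx₀r.trans_le (hx₁l.le.trans' le_rfl) |>.trans_le le_rfl
  have hx₁b : x₁ < b := lt_of_lt_of_le hx₁r (hp₄I.2.trans (by linarith))
  -- FTC equalities
  have ftc : ∀ s t : ℝ, (∫ u in s..t, deriv v u) = v t - v s := fun s t =>
    intervalIntegral.integral_deriv_eq_sub (fun x _ => (hdiff x)) (hdc.intervalIntegrable s t)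
  have hle1 : x₀ ≤ p₂ := hx₀r.le
  have hle2 : p₂ ≤ x₁ := hx₁l.le
  have ineq1 : 2 * ε < ∫ t in x₀..x₁, max (deriv v t) 0 := by
    have := aux_int1 (deriv v) hdc hle1 hle2
    rw [ftc x₀ p₂] at this
    linarith
  have ineq2 : 2 * ε < ∫ t in x₀..x₁, max (-(deriv v t)) 0 := by
    have := aux_int2 (fun t => -(deriv v t)) hdc.neg hle1 hle2
    have heq : (∫ t in p₂..x₁, -(deriv v t)) = -(v x₁ - v p₂) := by
      rw [intervalIntegral.integral_neg, ftc p₂ x₁]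
    rw [heq] at this
    linarith
  exact ⟨x₀, x₁, hax₀, hx₀r.trans_le hle2 |>.trans_le le_rfl |>.trans_le le_rfl |>.trans_le le_rfl |>.trans_le le_rfl |>.trans_le le_rfl, hx₁b, hd₀, hd₁, ineq1, ineq2⟩
end
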